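/- Let $A$ be an EW tournament matrix of order $4t+1$ with parameter $a$ (as in the defining equations), and assume $\det(A) = t^{2t}(4t-1)$. Then $a^2 - (2t+1)a + t(t-1) = 0$. -/

import Mathlib

open Matrix

/-- The all-ones matrix. -/
def allOnes {R : Type*} [One R] {m n : Type*} : Matrix m n R :=
  Matrix.of fun _ _ => 1

section Aux

/-- Block index of an element of a 4-fold sum type. -/
def blk4 {α β γ δ : Type*} : (α ⊕ β) ⊕ (γ ⊕ δ) → Fin 4 :=
  Sum.elim (Sum.elim (fun _ => 0) (fun _ => 1)) (Sum.elim (fun _ => 2) (fun _ => 3))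

/-- The coefficient pattern of the correction blocks in `A * Aᵀ`. -/
def cMat : Fin 4 → Fin 4 → ℤ
  | 0, 0 => -1 | 0, 1 => -1 | 0, 2 => -1 | 0, 3 => -1
  | 1, 0 => -1 | 1, 1 => 1  | 1, 2 => 0  | 1, 3 => 0
  | 2, 0 => -1 | 2, 1 => 0  | 2, 2 => 0  | 2, 3 => -1
  | 3, 0 => -1 | 3, 1 => 0  | 3, 2 => -1 | 3, 3 => 0

/-- Block sizes. -/
def sz4 (t a b : ℕ) : Fin 4 → ℤ
  | 0 => t | 1 => t | 2 => a | 3 => b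

def Umat {α β γ δ : Type*} : Matrix ((α ⊕ β) ⊕ (γ ⊕ δ)) (Fin 4) ℤ :=
  fun x k => if blk4 x = k then 1 else 0

def Vmat (t : ℕ) {α β γ δ : Type*} : Matrix (Fin 4) ((α ⊕ β) ⊕ (γ ⊕ δ)) ℤ :=
  fun k y => (t : ℤ) + cMat k (blk4 y)

set_option synthInstance.maxHeartbeats 400000 in
/-- Weinstein–Aronszajn style identity over ℚ. -/
lemma qWA {ι κ : Type*} [Fintype ι] [DecidableEq ι] [Fintype κ] [DecidableEq κ]
    (c : ℚ) (hc : c ≠ 0) (U : Matrix ι κ ℚ) (V : Matrix κ ι ℚ) :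
    (c • 1 + U * V).det * c ^ Fintype.card κ
      = c ^ Fintype.card ι * (c • 1 + V * U).det := by
  have h1 : c • (1 : Matrix ι ι ℚ) + U * V = c • (1 + (c⁻¹ • U) * V) := by
    rw [smul_add, Matrix.smul_mul, smul_smul, mul_inv_cancel₀ hc, one_smul]
  have h2 : (1 : Matrix κ κ ℚ) + V * (c⁻¹ • U) = c⁻¹ • (c • 1 + V * U) := by
    rw [Matrix.mul_smul, smul_add, smul_smul, inv_mul_cancel₀ hc, one_smul]
  rw [h1, Matrix.det_smul, Matrix.det_one_add_mul_comm (c⁻¹ • U) V, h2, Matrix.det_smul]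
  field_simp
  rw [one_div, inv_pow]; field_simp

/-- Integral version of the Weinstein–Aronszajn identity for `t•1 + U*V`. -/
lemma zWA {ι κ : Type*} [Fintype ι] [DecidableEq ι] [Fintype κ] [DecidableEq κ]
    (t : ℕ) (ht : 1 ≤ t) (U : Matrix ι κ ℤ) (V : Matrix κ ι ℤ) :
    ((t : ℤ) • 1 + U * V).det * (t : ℤ) ^ Fintype.card κ
      = (t : ℤ) ^ Fintype.card ι * ((t : ℤ) • 1 + V * U).det := by
  have hc : ((t : ℚ)) ≠ 0 := Nat.cast_ne_zero.mpr (by omega)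
  have key := qWA (t : ℚ) hc (U.map (Int.cast : ℤ → ℚ)) (V.map (Int.cast : ℤ → ℚ))
  have e1 : (t : ℚ) • 1 + U.map (Int.cast : ℤ → ℚ) * V.map (Int.cast : ℤ → ℚ)
      = ((t : ℤ) • 1 + U * V).map (Int.cast : ℤ → ℚ) := by
    ext x y
    simp only [Matrix.map_apply, Matrix.add_apply, Matrix.smul_apply, Matrix.one_apply,
      Matrix.mul_apply, smul_eq_mul]
    push_cast
    split_ifs <;> ring
  have e2 : (t : ℚ) • 1 + V.map (Int.cast : ℤ → ℚ) * U.map (Int.cast : ℤ → ℚ)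
      = ((t : ℤ) • 1 + V * U).map (Int.cast : ℤ → ℚ) := by
    ext x y
    simp only [Matrix.map_apply, Matrix.add_apply, Matrix.smul_apply, Matrix.one_apply,
      Matrix.mul_apply, smul_eq_mul]
    push_cast
    split_ifs <;> ring
  have hd1 : (((t : ℤ) • (1 : Matrix ι ι ℤ) + U * V).map (Int.cast : ℤ → ℚ)).det
      = ((((t : ℤ) • (1 : Matrix ι ι ℤ) + U * V).det : ℤ) : ℚ) := by
    simpa only [RingHom.mapMatrix_apply, Int.coe_castRingHom, eq_intCast] using
      (RingHom.map_det (Int.castRingHom ℚ) ((t : ℤ) • (1 : Matrix ι ι ℤ) + U * V)).symm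
  have hd2 : (((t : ℤ) • (1 : Matrix κ κ ℤ) + V * U).map (Int.cast : ℤ → ℚ)).det
      = ((((t : ℤ) • (1 : Matrix κ κ ℤ) + V * U).det : ℤ) : ℚ) := by
    simpa only [RingHom.mapMatrix_apply, Int.coe_castRingHom, eq_intCast] using
      (RingHom.map_det (Int.castRingHom ℚ) ((t : ℤ) • (1 : Matrix κ κ ℤ) + V * U)).symm
  rw [e1, e2, hd1, hd2] at key
  exact_mod_cast key

lemma det_fin_four' {R : Type*} [CommRing R] (M : Matrix (Fin 4) (Fin 4) R) : M.det =
    M 0 0 * (M 1 1 * (M 2 2 * M 3 3 - M 2 3 * M 3 2)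
      - M 1 2 * (M 2 1 * M 3 3 - M 2 3 * M 3 1)
      + M 1 3 * (M 2 1 * M 3 2 - M 2 2 * M 3 1))
    - M 0 1 * (M 1 0 * (M 2 2 * M 3 3 - M 2 3 * M 3 2)
      - M 1 2 * (M 2 0 * M 3 3 - M 2 3 * M 3 0)
      + M 1 3 * (M 2 0 * M 3 2 - M 2 2 * M 3 0))
    + M 0 2 * (M 1 0 * (M 2 1 * M 3 3 - M 2 3 * M 3 1)
      - M 1 1 * (M 2 0 * M 3 3 - M 2 3 * M 3 0)
      + M 1 3 * (M 2 0 * M 3 1 - M 2 1 * M 3 0))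
    - M 0 3 * (M 1 0 * (M 2 1 * M 3 2 - M 2 2 * M 3 1)
      - M 1 1 * (M 2 0 * M 3 2 - M 2 2 * M 3 0)
      + M 1 2 * (M 2 0 * M 3 1 - M 2 1 * M 3 0)) := by
  rw [Matrix.det_succ_row_zero]
  simp [Fin.sum_univ_succ, Matrix.det_fin_three, Matrix.submatrix_apply, Fin.succAbove,
    show ((2 : Fin 3).succ : Fin 4) = 3 from rfl,
    show (Fin.castSucc (2 : Fin 3) : Fin 4) = 2 from rfl]
  ring

end Aux

set_option maxHeartbeats 2000000 in
theorem ew_tournament_parameter_quadratic (t a : ℕ) (ht : 1 ≤ t) (ha : a ≤ 2 * t + 1)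
    (A : Matrix ((Fin t ⊕ Fin t) ⊕ (Fin a ⊕ Fin (2 * t + 1 - a)))
                ((Fin t ⊕ Fin t) ⊕ (Fin a ⊕ Fin (2 * t + 1 - a))) ℤ)
    (h01 : ∀ i j, A i j = 0 ∨ A i j = 1)
    (htour : A + Aᵀ = allOnes - 1)
    (hAAt : A * Aᵀ = (t : ℤ) • (1 + allOnes) +
      Matrix.fromBlocks
        (Matrix.fromBlocks (-allOnes) (-allOnes) (-allOnes) allOnes)
        (Matrix.fromBlocks (-allOnes) (-allOnes) 0 0)
        (Matrix.fromBlocks (-allOnes) 0 (-allOnes) 0)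
        (Matrix.fromBlocks 0 (-allOnes) (-allOnes) 0))
    (hAtA : Aᵀ * A = (t : ℤ) • (1 + allOnes) +
      Matrix.fromBlocks
        (Matrix.fromBlocks allOnes (-allOnes) (-allOnes) (-allOnes))
        (Matrix.fromBlocks 0 0 (-allOnes) (-allOnes))
        (Matrix.fromBlocks 0 (-allOnes) 0 (-allOnes))
        (Matrix.fromBlocks allOnes 0 0 (-allOnes)))
    (hdet : A.det = (t : ℤ) ^ (2 * t) * (4 * t - 1)) :
    (a : ℤ) ^ 2 - (2 * t + 1) * a + t * (t - 1) = 0 := by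
  have hbz : ((2 * t + 1 - a : ℕ) : ℤ) = 2 * (t : ℤ) + 1 - a := by
    have h : a + (2 * t + 1 - a) = 2 * t + 1 := by omega
    have := congrArg (fun n : ℕ => (n : ℤ)) h
    push_cast at this
    linarith
  -- Step 1: A * Aᵀ = t • 1 + U * V
  have step1 : A * Aᵀ = (t : ℤ) • 1 + Umat * Vmat t := by
    rw [hAAt]
    ext x y
    rcases x with ((x | x) | (x | x)) <;> rcases y with ((y | y) | (y | y)) <;>
      simp [Umat, Vmat, blk4, cMat, allOnes, Matrix.mul_apply, Fin.sum_univ_four,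
        Matrix.one_apply, Matrix.add_apply, Matrix.smul_apply] <;>
      ring
  -- Step 2: V * U is an explicit 4×4 matrix
  have step2 : (Vmat t : Matrix (Fin 4) ((Fin t ⊕ Fin t) ⊕ (Fin a ⊕ Fin (2 * t + 1 - a))) ℤ) * (Umat : Matrix ((Fin t ⊕ Fin t) ⊕ (Fin a ⊕ Fin (2 * t + 1 - a))) (Fin 4) ℤ)
      = Matrix.of fun k l => sz4 t a (2 * t + 1 - a) l * ((t : ℤ) + cMat k l) := by
    ext k l
    fin_cases l <;>
      simp [Matrix.mul_apply, Umat, Vmat, blk4, sz4, Fintype.sum_sum_type,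
        Finset.sum_const, Finset.card_univ, mul_comm] <;>
      ring
  -- cardinality
  have hcard : Fintype.card ((Fin t ⊕ Fin t) ⊕ (Fin a ⊕ Fin (2 * t + 1 - a))) = 4 * t + 1 := by
    simp only [Fintype.card_sum, Fintype.card_fin]
    omega
  -- the 4×4 determinant
  have hdet4 : ((t : ℤ) • (1 : Matrix (Fin 4) (Fin 4) ℤ) +
        (Vmat t : Matrix (Fin 4) ((Fin t ⊕ Fin t) ⊕ (Fin a ⊕ Fin (2 * t + 1 - a))) ℤ) * (Umat : Matrix ((Fin t ⊕ Fin t) ⊕ (Fin a ⊕ Fin (2 * t + 1 - a))) (Fin 4) ℤ)).det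
      = 4 * (t : ℤ) ^ 5 - (t : ℤ) ^ 4
        + 4 * (t : ℤ) ^ 4 * ((a : ℤ) + ((2 * t + 1 - a : ℕ) : ℤ))
        - 2 * (t : ℤ) ^ 3 * ((a : ℤ) + ((2 * t + 1 - a : ℕ) : ℤ))
        + 4 * (t : ℤ) ^ 3 * (a : ℤ) * ((2 * t + 1 - a : ℕ) : ℤ)
        - 3 * (t : ℤ) ^ 2 * (a : ℤ) * ((2 * t + 1 - a : ℕ) : ℤ) := by
    rw [step2, det_fin_four']
    simp only [Matrix.add_apply, Matrix.smul_apply, Matrix.of_apply, smul_eq_mul,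
      Matrix.one_apply, sz4, cMat]
    simp only [Fin.reduceEq, reduceIte, if_true, if_false]
    ring
  -- determinant of A*Aᵀ
  have hdetAA : ((t : ℤ) • (1 : Matrix ((Fin t ⊕ Fin t) ⊕ (Fin a ⊕ Fin (2 * t + 1 - a))) ((Fin t ⊕ Fin t) ⊕ (Fin a ⊕ Fin (2 * t + 1 - a))) ℤ) +
        (Umat : Matrix ((Fin t ⊕ Fin t) ⊕ (Fin a ⊕ Fin (2 * t + 1 - a))) (Fin 4) ℤ) * Vmat t).det
      = ((t : ℤ) ^ (2 * t) * (4 * t - 1)) ^ 2 := by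
    rw [← step1, Matrix.det_mul, Matrix.det_transpose, hdet]
    ring
  have hWA := zWA t ht (Umat : Matrix ((Fin t ⊕ Fin t) ⊕ (Fin a ⊕ Fin (2 * t + 1 - a))) (Fin 4) ℤ) (Vmat t)
  rw [hdetAA, hdet4, hcard, Fintype.card_fin] at hWA
  -- cancel t^(4t+1)
  have htz : (t : ℤ) ≠ 0 := by
    exact Int.natCast_ne_zero.mpr (by omega)
  have hcancel : (t : ℤ) ^ 3 * (4 * t - 1) ^ 2
      = 4 * (t : ℤ) ^ 5 - (t : ℤ) ^ 4
        + 4 * (t : ℤ) ^ 4 * ((a : ℤ) + ((2 * t + 1 - a : ℕ) : ℤ))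
        - 2 * (t : ℤ) ^ 3 * ((a : ℤ) + ((2 * t + 1 - a : ℕ) : ℤ))
        + 4 * (t : ℤ) ^ 3 * (a : ℤ) * ((2 * t + 1 - a : ℕ) : ℤ)
        - 3 * (t : ℤ) ^ 2 * (a : ℤ) * ((2 * t + 1 - a : ℕ) : ℤ) := by
    have hpow : ((t : ℤ) ^ (2 * t) * (4 * t - 1)) ^ 2 * (t : ℤ) ^ 4
        = (t : ℤ) ^ (4 * t + 1) * ((t : ℤ) ^ 3 * (4 * t - 1) ^ 2) := by ring
    rw [hpow] at hWA
    exact mul_left_cancel₀ (pow_ne_zero _ htz) hWA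
  rw [hbz] at hcancel
  have hq : ((t : ℤ) ^ 2 * (3 - 4 * t)) * ((a : ℤ) ^ 2 - (2 * t + 1) * a + t * (t - 1)) = 0 := by
    linear_combination -hcancel
  rcases mul_eq_zero.mp hq with h | h
  · exfalso
    have h1 : (1 : ℤ) ≤ (t : ℤ) := by exact_mod_cast ht
    nlinarith
  · exact h
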